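/- arXiv:1311.7065 — 2 statements merged into one kernel-verified Lean document; each statement's English description precedes it below -/
import Mathlib

section
/- Under the stated assumptions, the higher-order split-panel jackknife estimator is exactly unbiased: E[4·β̂_{N,T} − 2·β̃_{N,T/2} − 2·β̃_{N/2,T} + β̃_{N/2,T/2}] = β. -/
open MeasureTheory

/-- The two-way fixed-effects variance estimator computed on the subpanel with
individuals in `I` and time periods in `S`. -/
noncomputable def subPanelEst {Ω : Type*} {N T : ℕ} (Y : Fin N → Fin T → Ω → ℝ)
    (I : Finset (Fin N)) (S : Finset (Fin T)) (ω : Ω) : ℝ :=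
  ((I.card * S.card : ℕ) : ℝ)⁻¹ * ∑ i ∈ I, ∑ t ∈ S,
    (Y i t ω - ((S.card : ℕ) : ℝ)⁻¹ * ∑ s ∈ S, Y i s ω
      - ((I.card : ℕ) : ℝ)⁻¹ * ∑ j ∈ I, Y j t ω
      + ((I.card * S.card : ℕ) : ℝ)⁻¹ * ∑ j ∈ I, ∑ s ∈ S, Y j s ω) ^ 2

/-- The first half `{1,…,n}` of the index set `{1,…,2n}`. -/
def firstHalf (n : ℕ) : Finset (Fin (2 * n)) :=
  Finset.univ.filter fun i => (i : ℕ) < n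

/-- The second half `{n+1,…,2n}` of the index set `{1,…,2n}`. -/
def secondHalf (n : ℕ) : Finset (Fin (2 * n)) :=
  Finset.univ.filter fun i => n ≤ (i : ℕ)

section aux
variable {Ω : Type*} [MeasurableSpace Ω] {P : Measure Ω}

lemma integrable_mul_of_memL2 {f g : Ω → ℝ} (hf : MemLp f 2 P) (hg : MemLp g 2 P) :
    Integrable (fun ω => f ω * g ω) P := by
  have h1 : Integrable (fun ω => (f ω + g ω) ^ 2) P := by
    simpa [Pi.add_apply] using (hf.add hg).integrable_sq
  have key : (fun ω => f ω * g ω)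
      = fun ω => ((f ω + g ω) ^ 2 - f ω ^ 2 - g ω ^ 2) / 2 := by
    funext ω; ring
  rw [key]
  exact ((h1.sub hf.integrable_sq).sub hg.integrable_sq).div_const 2

lemma integral_sq_sum {ι : Type*} [DecidableEq ι] (A : Finset ι) (c : ι → ℝ) (ε : ι → Ω → ℝ)
    (β : ℝ) (hL2 : ∀ i, MemLp (ε i) 2 P)
    (hcov : ∀ i ∈ A, ∀ j ∈ A, ∫ ω, ε i ω * ε j ω ∂P = if i = j then β else 0) :
    ∫ ω, (∑ i ∈ A, c i * ε i ω) ^ 2 ∂P = (∑ i ∈ A, c i ^ 2) * β := by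
  have h1 : ∀ ω : Ω, (∑ i ∈ A, c i * ε i ω) ^ 2
      = ∑ i ∈ A, ∑ j ∈ A, (c i * c j) * (ε i ω * ε j ω) := by
    intro ω
    rw [sq, Finset.sum_mul_sum]
    exact Finset.sum_congr rfl fun i _ => Finset.sum_congr rfl fun j _ => by ring
  simp only [h1]
  rw [integral_finset_sum _ (fun i _ => integrable_finset_sum _
    (fun j _ => (integrable_mul_of_memL2 (hL2 i) (hL2 j)).const_mul _))]
  have h2 : ∀ i ∈ A, ∫ ω, ∑ j ∈ A, (c i * c j) * (ε i ω * ε j ω) ∂P = c i ^ 2 * β := by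
    intro i hi
    rw [integral_finset_sum _ (fun j _ =>
      (integrable_mul_of_memL2 (hL2 i) (hL2 j)).const_mul _)]
    have h3 : ∀ j ∈ A, ∫ ω, (c i * c j) * (ε i ω * ε j ω) ∂P
        = if i = j then c i * c j * β else 0 := by
      intro j hj
      rw [integral_const_mul, hcov i hi j hj]
      split <;> ring
    rw [Finset.sum_congr rfl h3, Finset.sum_ite_eq A i (fun j => c i * c j * β), if_pos hi]
    ring
  rw [Finset.sum_congr rfl h2, ← Finset.sum_mul]

lemma sum_dsub {ι : Type*} [DecidableEq ι] (S : Finset ι) (t : ι) (ht : t ∈ S) (c : ℝ)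
    (f : ι → ℝ) :
    ∑ s ∈ S, ((if s = t then (1:ℝ) else 0) - c) * f s = f t - c * ∑ s ∈ S, f s := by
  simp only [sub_mul, Finset.sum_sub_distrib, ite_mul, one_mul, zero_mul]
  rw [Finset.sum_ite_eq' S t f, if_pos ht, ← Finset.mul_sum]

lemma sum_w_sq {N : ℕ} (I : Finset (Fin N)) (i : Fin N) (hi : i ∈ I) :
    ∑ j ∈ I, ((if j = i then (1:ℝ) else 0) - (I.card : ℝ)⁻¹) ^ 2 = 1 - (I.card : ℝ)⁻¹ := by
  have hp0 : 1 ≤ I.card := Finset.card_pos.mpr ⟨i, hi⟩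
  have hp : (I.card : ℝ) ≠ 0 := by
    have : 0 < I.card := hp0; exact_mod_cast this.ne'
  rw [← Finset.add_sum_erase _ _ hi, if_pos rfl]
  have h3 : ∀ j ∈ I.erase i, ((if j = i then (1:ℝ) else 0) - (I.card : ℝ)⁻¹) ^ 2
      = ((I.card : ℝ)⁻¹) ^ 2 := by
    intro j hj
    rw [if_neg (Finset.ne_of_mem_erase hj)]
    ring
  rw [Finset.sum_congr rfl h3, Finset.sum_const, Finset.card_erase_of_mem hi, nsmul_eq_mul,
    Nat.cast_sub hp0, Nat.cast_one]
  field_simp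
  ring

lemma demean_repr {N T : ℕ} (α : Fin N → ℝ) (γ : Fin T → ℝ) (Y : Fin N → Fin T → Ω → ℝ)
    (I : Finset (Fin N)) (S : Finset (Fin T)) {i : Fin N} {t : Fin T}
    (hi : i ∈ I) (ht : t ∈ S) (ω : Ω) :
    Y i t ω - ((S.card : ℕ) : ℝ)⁻¹ * ∑ s ∈ S, Y i s ω
      - ((I.card : ℕ) : ℝ)⁻¹ * ∑ j ∈ I, Y j t ω
      + ((I.card * S.card : ℕ) : ℝ)⁻¹ * ∑ j ∈ I, ∑ s ∈ S, Y j s ω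
    = ∑ p ∈ I ×ˢ S, (((if p.1 = i then (1:ℝ) else 0) - (I.card : ℝ)⁻¹)
        * ((if p.2 = t then (1:ℝ) else 0) - (S.card : ℝ)⁻¹))
        * (Y p.1 p.2 ω - α p.1 - γ p.2) := by
  have hp : (I.card : ℝ) ≠ 0 := by
    have : 0 < I.card := Finset.card_pos.mpr ⟨i, hi⟩
    exact_mod_cast this.ne'
  have hq : (S.card : ℝ) ≠ 0 := by
    have : 0 < S.card := Finset.card_pos.mpr ⟨t, ht⟩
    exact_mod_cast this.ne'
  rw [Finset.sum_product]
  have hinner : ∀ j : Fin N,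
      ∑ s ∈ S, (((if j = i then (1:ℝ) else 0) - (I.card : ℝ)⁻¹)
        * ((if s = t then (1:ℝ) else 0) - (S.card : ℝ)⁻¹)) * (Y j s ω - α j - γ s)
      = ((if j = i then (1:ℝ) else 0) - (I.card : ℝ)⁻¹)
        * ((Y j t ω - α j - γ t)
          - (S.card : ℝ)⁻¹ * ∑ s ∈ S, (Y j s ω - α j - γ s)) := by
    intro j
    rw [← sum_dsub S t ht ((S.card : ℝ)⁻¹) (fun s => Y j s ω - α j - γ s), Finset.mul_sum]
    exact Finset.sum_congr rfl fun s _ => by ring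
  simp only [hinner]
  rw [sum_dsub I i hi ((I.card : ℝ)⁻¹)
    (fun j => (Y j t ω - α j - γ t) - (S.card : ℝ)⁻¹ * ∑ s ∈ S, (Y j s ω - α j - γ s))]
  push_cast [Nat.cast_mul]
  simp only [Finset.sum_sub_distrib, Finset.sum_const, nsmul_eq_mul, ← Finset.mul_sum,
    mul_inv]
  field_simp
  ring

lemma subPanel_main {N T : ℕ} (β : ℝ) (α : Fin N → ℝ) (γ : Fin T → ℝ)
    (Y : Fin N → Fin T → Ω → ℝ)
    (hL2 : ∀ (i : Fin N) (t : Fin T), MemLp (fun ω => Y i t ω - α i - γ t) 2 P)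
    (hvar : ∀ (i : Fin N) (t : Fin T), ∫ ω, (Y i t ω - α i - γ t) ^ 2 ∂P = β)
    (horth : ∀ (i j : Fin N) (t s : Fin T), (i, t) ≠ (j, s) →
      ∫ ω, (Y i t ω - α i - γ t) * (Y j s ω - α j - γ s) ∂P = 0)
    (I : Finset (Fin N)) (S : Finset (Fin T)) (hI : I.Nonempty) (hS : S.Nonempty) :
    Integrable (subPanelEst Y I S) P ∧
      ∫ ω, subPanelEst Y I S ω ∂P
        = β * ((1 - (I.card : ℝ)⁻¹) * (1 - (S.card : ℝ)⁻¹)) := by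
  classical
  set ε : Fin N × Fin T → Ω → ℝ := fun p ω => Y p.1 p.2 ω - α p.1 - γ p.2 with hε
  set c : Fin N → Fin T → Fin N × Fin T → ℝ := fun i t p =>
    ((if p.1 = i then (1:ℝ) else 0) - (I.card : ℝ)⁻¹)
      * ((if p.2 = t then (1:ℝ) else 0) - (S.card : ℝ)⁻¹) with hc
  have hrepr : subPanelEst Y I S = fun ω =>
      ((I.card * S.card : ℕ) : ℝ)⁻¹ * ∑ i ∈ I, ∑ t ∈ S,
        (∑ p ∈ I ×ˢ S, c i t p * ε p ω) ^ 2 := by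
    funext ω
    unfold subPanelEst
    congr 1
    refine Finset.sum_congr rfl fun i hi => Finset.sum_congr rfl fun t ht => ?_
    rw [demean_repr α γ Y I S hi ht ω]
  have hL2' : ∀ p : Fin N × Fin T, MemLp (ε p) 2 P := fun p => hL2 p.1 p.2
  have hlin : ∀ (i : Fin N) (t : Fin T),
      MemLp (fun ω => ∑ p ∈ I ×ˢ S, c i t p * ε p ω) 2 P := fun i t =>
    memLp_finset_sum _ fun p _ => (hL2' p).const_mul _
  have hsq : ∀ (i : Fin N) (t : Fin T),
      Integrable (fun ω => (∑ p ∈ I ×ˢ S, c i t p * ε p ω) ^ 2) P := fun i t =>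
    (hlin i t).integrable_sq
  constructor
  · rw [hrepr]
    exact (integrable_finset_sum _ fun i _ =>
      integrable_finset_sum _ fun t _ => hsq i t).const_mul _
  · have hcov : ∀ p ∈ I ×ˢ S, ∀ q ∈ I ×ˢ S,
        ∫ ω, ε p ω * ε q ω ∂P = if p = q then β else 0 := by
      intro p _ q _
      by_cases hpq : p = q
      · subst hpq
        rw [if_pos rfl]
        simp_rw [hε, ← sq]
        exact hvar p.1 p.2
      · rw [if_neg hpq]
        exact horth p.1 q.1 p.2 q.2 (by simpa using hpq)
    have hval : ∀ i ∈ I, ∀ t ∈ S,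
        ∫ ω, (∑ p ∈ I ×ˢ S, c i t p * ε p ω) ^ 2 ∂P
          = ((1 - (I.card : ℝ)⁻¹) * (1 - (S.card : ℝ)⁻¹)) * β := by
      intro i hi t ht
      rw [integral_sq_sum (I ×ˢ S) (c i t) ε β hL2' hcov]
      congr 1
      rw [Finset.sum_product]
      simp only [hc, mul_pow]
      rw [← Finset.sum_mul_sum I S
        (fun j => ((if j = i then (1:ℝ) else 0) - (I.card : ℝ)⁻¹) ^ 2)
        (fun s => ((if s = t then (1:ℝ) else 0) - (S.card : ℝ)⁻¹) ^ 2),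
        sum_w_sq I i hi, sum_w_sq S t ht]
    rw [hrepr, integral_const_mul,
      integral_finset_sum _ (fun i _ => integrable_finset_sum _ fun t _ => hsq i t)]
    have : ∀ i ∈ I, ∫ ω, ∑ t ∈ S, (∑ p ∈ I ×ˢ S, c i t p * ε p ω) ^ 2 ∂P
        = (S.card : ℝ) * (((1 - (I.card : ℝ)⁻¹) * (1 - (S.card : ℝ)⁻¹)) * β) := by
      intro i hi
      rw [integral_finset_sum _ fun t _ => hsq i t,
        Finset.sum_congr rfl (hval i hi), Finset.sum_const, nsmul_eq_mul]
    rw [Finset.sum_congr rfl this, Finset.sum_const, nsmul_eq_mul]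
    have hp : (I.card : ℝ) ≠ 0 := by
      have : 0 < I.card := Finset.card_pos.mpr hI
      exact_mod_cast this.ne'
    have hq : (S.card : ℝ) ≠ 0 := by
      have : 0 < S.card := Finset.card_pos.mpr hS
      exact_mod_cast this.ne'
    push_cast [Nat.cast_mul]
    field_simp

lemma firstHalf_card (n : ℕ) : (firstHalf n).card = n := by
  unfold firstHalf
  rw [Finset.card_filter]
  rw [Fin.sum_univ_eq_sum_range (fun k => if k < n then 1 else 0)]
  rw [← Finset.card_filter]
  have : Finset.filter (fun k => k < n) (Finset.range (2 * n)) = Finset.range n := by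
    ext k
    simp only [Finset.mem_filter, Finset.mem_range]
    omega
  rw [this, Finset.card_range]

lemma secondHalf_card (n : ℕ) : (secondHalf n).card = n := by
  unfold secondHalf
  rw [Finset.card_filter]
  rw [Fin.sum_univ_eq_sum_range (fun k => if n ≤ k then 1 else 0)]
  rw [← Finset.card_filter]
  have : Finset.filter (fun k => n ≤ k) (Finset.range (2 * n)) = Finset.Ico n (2 * n) := by
    ext k
    simp only [Finset.mem_filter, Finset.mem_range, Finset.mem_Ico]
    omega
  rw [this, Nat.card_Ico]
  omega

end aux

/-- The higher-order split-panel jackknife estimator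
`4·β̂_{N,T} − 2·β̃_{N,T/2} − 2·β̃_{N/2,T} + β̃_{N/2,T/2}` is exactly unbiased for `β`. -/
theorem higher_order_split_panel_jackknife_unbiased
    {Ω : Type*} [MeasurableSpace Ω] {P : Measure Ω} [IsProbabilityMeasure P]
    {n m : ℕ} (hn : 1 ≤ n) (hm : 1 ≤ m)
    (β : ℝ) (α : Fin (2 * n) → ℝ) (γ : Fin (2 * m) → ℝ)
    (Y : Fin (2 * n) → Fin (2 * m) → Ω → ℝ)
    (hL2 : ∀ (i : Fin (2 * n)) (t : Fin (2 * m)),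
      MemLp (fun ω => Y i t ω - α i - γ t) 2 P)
    (hmean : ∀ (i : Fin (2 * n)) (t : Fin (2 * m)),
      ∫ ω, (Y i t ω - α i - γ t) ∂P = 0)
    (hvar : ∀ (i : Fin (2 * n)) (t : Fin (2 * m)),
      ∫ ω, (Y i t ω - α i - γ t) ^ 2 ∂P = β)
    (horth : ∀ (i j : Fin (2 * n)) (t s : Fin (2 * m)), (i, t) ≠ (j, s) →
      ∫ ω, (Y i t ω - α i - γ t) * (Y j s ω - α j - γ s) ∂P = 0) :
    ∫ ω, (4 * subPanelEst Y Finset.univ Finset.univ ω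
        - 2 * ((subPanelEst Y Finset.univ (firstHalf m) ω
            + subPanelEst Y Finset.univ (secondHalf m) ω) / 2)
        - 2 * ((subPanelEst Y (firstHalf n) Finset.univ ω
            + subPanelEst Y (secondHalf n) Finset.univ ω) / 2)
        + (subPanelEst Y (firstHalf n) (firstHalf m) ω
            + subPanelEst Y (firstHalf n) (secondHalf m) ω
            + subPanelEst Y (secondHalf n) (firstHalf m) ω
            + subPanelEst Y (secondHalf n) (secondHalf m) ω) / 4) ∂P
      = β := by
  have hNu : (Finset.univ : Finset (Fin (2 * n))).Nonempty := by
    have : 0 < 2 * n := by omega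
    exact ⟨⟨0, this⟩, Finset.mem_univ _⟩
  have hTu : (Finset.univ : Finset (Fin (2 * m))).Nonempty := by
    have : 0 < 2 * m := by omega
    exact ⟨⟨0, this⟩, Finset.mem_univ _⟩
  have hfn : (firstHalf n).Nonempty := by
    apply Finset.card_pos.mp; rw [firstHalf_card]; omega
  have hsn : (secondHalf n).Nonempty := by
    apply Finset.card_pos.mp; rw [secondHalf_card]; omega
  have hfm : (firstHalf m).Nonempty := by
    apply Finset.card_pos.mp; rw [firstHalf_card]; omega
  have hsm : (secondHalf m).Nonempty := by
    apply Finset.card_pos.mp; rw [secondHalf_card]; omega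
  obtain ⟨I1, V1⟩ := subPanel_main β α γ Y hL2 hvar horth _ _ hNu hTu
  obtain ⟨I2, V2⟩ := subPanel_main β α γ Y hL2 hvar horth _ _ hNu hfm
  obtain ⟨I3, V3⟩ := subPanel_main β α γ Y hL2 hvar horth _ _ hNu hsm
  obtain ⟨I4, V4⟩ := subPanel_main β α γ Y hL2 hvar horth _ _ hfn hTu
  obtain ⟨I5, V5⟩ := subPanel_main β α γ Y hL2 hvar horth _ _ hsn hTu
  obtain ⟨I6, V6⟩ := subPanel_main β α γ Y hL2 hvar horth _ _ hfn hfm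
  obtain ⟨I7, V7⟩ := subPanel_main β α γ Y hL2 hvar horth _ _ hfn hsm
  obtain ⟨I8, V8⟩ := subPanel_main β α γ Y hL2 hvar horth _ _ hsn hfm
  obtain ⟨I9, V9⟩ := subPanel_main β α γ Y hL2 hvar horth _ _ hsn hsm
  set f1 := subPanelEst Y (Finset.univ : Finset (Fin (2*n))) (Finset.univ : Finset (Fin (2*m)))
  set f2 := subPanelEst Y (Finset.univ : Finset (Fin (2*n))) (firstHalf m)
  set f3 := subPanelEst Y (Finset.univ : Finset (Fin (2*n))) (secondHalf m)
  set f4 := subPanelEst Y (firstHalf n) (Finset.univ : Finset (Fin (2*m)))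
  set f5 := subPanelEst Y (secondHalf n) (Finset.univ : Finset (Fin (2*m)))
  set f6 := subPanelEst Y (firstHalf n) (firstHalf m)
  set f7 := subPanelEst Y (firstHalf n) (secondHalf m)
  set f8 := subPanelEst Y (secondHalf n) (firstHalf m)
  set f9 := subPanelEst Y (secondHalf n) (secondHalf m)
  have J2 : Integrable (fun ω => (f2 ω + f3 ω) / 2) P := (I2.add I3).div_const 2
  have J4 : Integrable (fun ω => (f4 ω + f5 ω) / 2) P := (I4.add I5).div_const 2
  have M1 : Integrable (fun ω => f6 ω + f7 ω) P := I6.add I7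
  have M2 : Integrable (fun ω => f6 ω + f7 ω + f8 ω) P := M1.add I8
  have J6 : Integrable (fun ω => (f6 ω + f7 ω + f8 ω + f9 ω) / 4) P :=
    (M2.add I9).div_const 4
  have K1 : Integrable (fun ω => 4 * f1 ω) P := I1.const_mul 4
  have K2 : Integrable (fun ω => 2 * ((f2 ω + f3 ω) / 2)) P := J2.const_mul 2
  have K4 : Integrable (fun ω => 2 * ((f4 ω + f5 ω) / 2)) P := J4.const_mul 2
  have L1 : Integrable (fun ω => 4 * f1 ω - 2 * ((f2 ω + f3 ω) / 2)) P := K1.sub K2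
  have L2 : Integrable
      (fun ω => 4 * f1 ω - 2 * ((f2 ω + f3 ω) / 2) - 2 * ((f4 ω + f5 ω) / 2)) P := L1.sub K4
  rw [integral_add L2 J6, integral_sub L1 K4, integral_sub K1 K2, integral_const_mul,
    integral_const_mul, integral_const_mul, integral_div, integral_div, integral_div,
    integral_add I2 I3, integral_add I4 I5, integral_add M2 I9, integral_add M1 I8,
    integral_add I6 I7, V1, V2, V3, V4, V5, V6, V7, V8, V9]
  simp only [Finset.card_univ, Fintype.card_fin, firstHalf_card, secondHalf_card]
  have hx : ((n : ℝ)) ≠ 0 := by exact_mod_cast (by omega : n ≠ 0)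
  have hy : ((m : ℝ)) ≠ 0 := by exact_mod_cast (by omega : m ≠ 0)
  push_cast
  field_simp
  ring
end

section
/- Let A, B and C be N×T real matrices, let (α^A, γ^A) solve the h-weighted normal equations for A, and let (α^B, γ^B) solve the h-weighted normal equations for B. Define the (N+T)×(N+T) matrix 𝒞 := (NT)^{-1} times the block matrix with upper-left block diag(C 1_T), upper-right block C, lower-left block Cᵀ, and lower-right block diag(Cᵀ 1_N). Then 𝒜ᵀ H̄^{-1} 𝒞 H̄^{-1} ℬ = (NT)^{-2} · Σ_{i,t} (α^A_i + γ^A_t)·C_{it}·(α^B_i + γ^B_t). -/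
open Matrix

/-- The penalized expected incidental-parameter Hessian
`H̄ = (NT)^{-1/2}·(M + b·v vᵀ)` with `v = (1_N', −1_T')'`. -/
noncomputable def Hbar {N T : ℕ} (w : Fin N → Fin T → ℝ) (b : ℝ) :
    Matrix (Fin N ⊕ Fin T) (Fin N ⊕ Fin T) ℝ :=
  (Real.sqrt ((N : ℝ) * T))⁻¹ •
    (Matrix.fromBlocks (Matrix.diagonal fun i => ∑ t, w i t) (Matrix.of fun i t => w i t)
        (Matrix.of fun t i => w i t) (Matrix.diagonal fun t => ∑ i, w i t)
      + b • Matrix.vecMulVec (Sum.elim (fun _ => (1 : ℝ)) fun _ => -1)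
          (Sum.elim (fun _ => (1 : ℝ)) fun _ => -1))

/-- The vector `𝒳 = (NT)^{-1}·(X 1_T ; Xᵀ 1_N)` associated to an `N×T` matrix `X`. -/
noncomputable def scoreVec {N T : ℕ} (X : Matrix (Fin N) (Fin T) ℝ) :
    Fin N ⊕ Fin T → ℝ :=
  ((N : ℝ) * T)⁻¹ • Sum.elim (fun i => ∑ t, X i t) fun t => ∑ i, X i t

/-- The matrix `𝒞 = (NT)^{-1}·(diag(C 1_T), C; Cᵀ, diag(Cᵀ 1_N))` associated to an
`N×T` matrix `C`. -/
noncomputable def Cmat {N T : ℕ} (C : Matrix (Fin N) (Fin T) ℝ) :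
    Matrix (Fin N ⊕ Fin T) (Fin N ⊕ Fin T) ℝ :=
  ((N : ℝ) * T)⁻¹ •
    Matrix.fromBlocks (Matrix.diagonal fun i => ∑ t, C i t) C C.transpose
      (Matrix.diagonal fun t => ∑ i, C i t)

lemma M_mulVec {N T : ℕ} (w : Fin N → Fin T → ℝ) (b : ℝ)
    (X : Matrix (Fin N) (Fin T) ℝ) (α : Fin N → ℝ) (γ : Fin T → ℝ)
    (h1 : ∀ i, ∑ t, w i t * (α i + γ t) = ∑ t, X i t)
    (h2 : ∀ t, ∑ i, w i t * (α i + γ t) = ∑ i, X i t)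
    (h0 : ∑ i, α i = ∑ t, γ t) :
    (Matrix.fromBlocks (Matrix.diagonal fun i => ∑ t, w i t) (Matrix.of fun i t => w i t)
        (Matrix.of fun t i => w i t) (Matrix.diagonal fun t => ∑ i, w i t)
      + b • Matrix.vecMulVec (Sum.elim (fun _ => (1 : ℝ)) fun _ => -1)
          (Sum.elim (fun _ => (1 : ℝ)) fun _ => -1)).mulVec (Sum.elim α γ)
      = Sum.elim (fun i => ∑ t, X i t) fun t => ∑ i, X i t := by
  funext x
  cases x with
  | inl i =>
      have key : α i * (∑ t, w i t) + ∑ t, γ t * w i t = ∑ t, X i t := by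
        rw [← h1 i]; simp [mul_add, Finset.sum_add_distrib, Finset.mul_sum, mul_comm]
      simp only [Matrix.mulVec, dotProduct, Fintype.sum_sum_type, Matrix.add_apply,
        Matrix.fromBlocks_apply₁₁, Matrix.fromBlocks_apply₁₂, Matrix.smul_apply,
        Matrix.vecMulVec_apply, Sum.elim_inl, Sum.elim_inr, Matrix.diagonal_apply,
        Matrix.of_apply, smul_eq_mul]
      simp [ite_mul, add_mul, Finset.sum_add_distrib, Finset.sum_ite_eq, mul_comm]
      simp only [mul_add, mul_sub, mul_ite, mul_zero, Finset.sum_add_distrib,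
        Finset.sum_sub_distrib, Finset.sum_ite_eq, Finset.mem_univ, if_true,
        ← Finset.sum_mul, Finset.sum_neg_distrib]
      linear_combination key + b * h0
  | inr t =>
      have key : (∑ i, α i * w i t) + γ t * (∑ i, w i t) = ∑ i, X i t := by
        rw [← h2 t]; simp [mul_add, Finset.sum_add_distrib, Finset.mul_sum, mul_comm]
      simp only [Matrix.mulVec, dotProduct, Fintype.sum_sum_type, Matrix.add_apply,
        Matrix.fromBlocks_apply₂₁, Matrix.fromBlocks_apply₂₂, Matrix.smul_apply,
        Matrix.vecMulVec_apply, Sum.elim_inl, Sum.elim_inr, Matrix.diagonal_apply,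
        Matrix.of_apply, smul_eq_mul]
      simp [ite_mul, add_mul, Finset.sum_add_distrib, Finset.sum_ite_eq, mul_comm]
      simp only [mul_add, mul_sub, mul_ite, mul_zero, Finset.sum_add_distrib,
        Finset.sum_sub_distrib, Finset.sum_ite_eq, Finset.mem_univ, if_true,
        ← Finset.sum_mul, Finset.sum_neg_distrib]
      linear_combination key - b * h0

lemma hbar_mulVec {N T : ℕ} (hN : 0 < N) (hT : 0 < T) (w : Fin N → Fin T → ℝ) (b : ℝ)
    (X : Matrix (Fin N) (Fin T) ℝ) (α : Fin N → ℝ) (γ : Fin T → ℝ)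
    (h1 : ∀ i, ∑ t, w i t * (α i + γ t) = ∑ t, X i t)
    (h2 : ∀ t, ∑ i, w i t * (α i + γ t) = ∑ i, X i t)
    (h0 : ∑ i, α i = ∑ t, γ t) :
    (Hbar w b).mulVec (Sum.elim α γ) = Real.sqrt ((N:ℝ)*T) • scoreVec X := by
  have hNT : (0:ℝ) < (N:ℝ)*T := by positivity
  have hsq : Real.sqrt ((N:ℝ)*T) * Real.sqrt ((N:ℝ)*T) = (N:ℝ)*T :=
    Real.mul_self_sqrt hNT.le
  rw [Hbar, Matrix.smul_mulVec, M_mulVec w b X α γ h1 h2 h0, scoreVec,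
    smul_smul]
  congr 1
  have hs : Real.sqrt ((N:ℝ)*T) ≠ 0 := by positivity
  have eN : Real.sqrt N * Real.sqrt N = (N:ℝ) := Real.mul_self_sqrt (by positivity)
  have eT : Real.sqrt T * Real.sqrt T = (T:ℝ) := Real.mul_self_sqrt (by positivity)
  field_simp
  linear_combination -hsq

lemma quadForm {N T : ℕ} (C : Matrix (Fin N) (Fin T) ℝ)
    (α α' : Fin N → ℝ) (γ γ' : Fin T → ℝ) :
    Sum.elim α γ ⬝ᵥ (Matrix.fromBlocks (Matrix.diagonal fun i => ∑ t, C i t) C C.transpose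
      (Matrix.diagonal fun t => ∑ i, C i t)).mulVec (Sum.elim α' γ')
    = ∑ i, ∑ t, (α i + γ t) * C i t * (α' i + γ' t) := by
  have expand : ∀ (i : Fin N) (t : Fin T),
      (α i + γ t) * C i t * (α' i + γ' t)
        = α i * (C i t * α' i) + α i * (C i t * γ' t)
          + (γ t * (C i t * α' i) + γ t * (C i t * γ' t)) := by intros; ring
  simp only [expand, Finset.sum_add_distrib]
  simp [dotProduct, Matrix.mulVec, Fintype.sum_sum_type, Matrix.diagonal,
    Matrix.of_apply, ite_mul, Finset.sum_ite_eq, mul_add, Finset.mul_sum,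
    Finset.sum_add_distrib, mul_comm, mul_left_comm]
  rw [show (∑ x : Fin T, ∑ x_1 : Fin N, C x_1 x * (α' x_1 * γ x))
      = ∑ x_1 : Fin N, ∑ x : Fin T, C x_1 x * (α' x_1 * γ x) from Finset.sum_comm,
    show (∑ x : Fin T, ∑ x_1 : Fin N, C x_1 x * (γ x * γ' x))
      = ∑ x_1 : Fin N, ∑ x : Fin T, C x_1 x * (γ x * γ' x) from Finset.sum_comm]
  ring

lemma hbar_symm {N T : ℕ} (w : Fin N → Fin T → ℝ) (b : ℝ) :
    (Hbar w b)ᵀ = Hbar w b := by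
  unfold Hbar
  have h1 : (Matrix.of fun (i : Fin N) (t : Fin T) => w i t)ᵀ
      = Matrix.of fun t i => w i t := by ext; simp
  have h2 : (Matrix.of fun (t : Fin T) (i : Fin N) => w i t)ᵀ
      = Matrix.of fun i t => w i t := by ext; simp
  have h3 : (Matrix.vecMulVec (Sum.elim (fun _ : Fin N => (1 : ℝ)) fun _ : Fin T => -1)
      (Sum.elim (fun _ : Fin N => (1 : ℝ)) fun _ : Fin T => -1))ᵀ
      = Matrix.vecMulVec (Sum.elim (fun _ : Fin N => (1 : ℝ)) fun _ : Fin T => -1)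
          (Sum.elim (fun _ : Fin N => (1 : ℝ)) fun _ : Fin T => -1) := by
    ext x y; simp [Matrix.vecMulVec, mul_comm]
  rw [Matrix.transpose_smul, Matrix.transpose_add, Matrix.transpose_smul,
    Matrix.fromBlocks_transpose, Matrix.diagonal_transpose, Matrix.diagonal_transpose,
    h1, h2, h3]

/-- If `(α^A, γ^A)` and `(α^B, γ^B)` solve the `h`-weighted normal equations for `A` and
`B`, then `𝒜ᵀ H̄⁻¹ 𝒞 H̄⁻¹ ℬ = (NT)^{-2}·Σ_{i,t}(α^A_i + γ^A_t)·C_{it}·(α^B_i + γ^B_t)`. -/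
theorem projection_formula_sandwich {N T : ℕ} (hN : 0 < N) (hT : 0 < T)
    (w : Fin N → Fin T → ℝ) (hw : ∀ i t, 0 < w i t) (b : ℝ) (hb : 0 < b)
    (hH : IsUnit (Hbar w b))
    (A B C : Matrix (Fin N) (Fin T) ℝ)
    (αA : Fin N → ℝ) (γA : Fin T → ℝ)
    (hA1 : ∀ i, ∑ t, w i t * (αA i + γA t) = ∑ t, A i t)
    (hA2 : ∀ t, ∑ i, w i t * (αA i + γA t) = ∑ i, A i t)
    (αB : Fin N → ℝ) (γB : Fin T → ℝ)
    (hB1 : ∀ i, ∑ t, w i t * (αB i + γB t) = ∑ t, B i t)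
    (hB2 : ∀ t, ∑ i, w i t * (αB i + γB t) = ∑ i, B i t) :
    scoreVec A ⬝ᵥ ((Hbar w b)⁻¹ * Cmat C * (Hbar w b)⁻¹).mulVec (scoreVec B)
      = (((N : ℝ) * T) ^ 2)⁻¹ *
          ∑ i, ∑ t, (αA i + γA t) * C i t * (αB i + γB t) := by
  have hNT0 : (0:ℝ) < (N:ℝ)*T := by positivity
  set c := Real.sqrt ((N:ℝ)*T) with hcdef
  have hc : c ≠ 0 := by positivity
  have hcc : c * c = (N:ℝ)*T := Real.mul_self_sqrt hNT0.le
  have hNTadd : ((N:ℝ) + T) ≠ 0 := by positivity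
  -- recentered solutions
  set cA : ℝ := ((∑ t, γA t) - ∑ i, αA i) / ((N:ℝ) + T) with hcA
  set cB : ℝ := ((∑ t, γB t) - ∑ i, αB i) / ((N:ℝ) + T) with hcB
  set αA' : Fin N → ℝ := fun i => αA i + cA with hαA'
  set γA' : Fin T → ℝ := fun t => γA t - cA with hγA'
  set αB' : Fin N → ℝ := fun i => αB i + cB with hαB'
  set γB' : Fin T → ℝ := fun t => γB t - cB with hγB'
  have hsumA : ∀ i t, αA' i + γA' t = αA i + γA t := by intro i t; simp [hαA', hγA']
  have hsumB : ∀ i t, αB' i + γB' t = αB i + γB t := by intro i t; simp [hαB', hγB']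
  have h0A : ∑ i, αA' i = ∑ t, γA' t := by
    simp only [hαA', hγA', Finset.sum_add_distrib, Finset.sum_sub_distrib,
      Finset.sum_const, Finset.card_univ, Fintype.card_fin, nsmul_eq_mul]
    rw [hcA]; field_simp; ring
  have h0B : ∑ i, αB' i = ∑ t, γB' t := by
    simp only [hαB', hγB', Finset.sum_add_distrib, Finset.sum_sub_distrib,
      Finset.sum_const, Finset.card_univ, Fintype.card_fin, nsmul_eq_mul]
    rw [hcB]; field_simp; ring
  have hA1' : ∀ i, ∑ t, w i t * (αA' i + γA' t) = ∑ t, A i t := by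
    intro i; simp only [hsumA]; exact hA1 i
  have hA2' : ∀ t, ∑ i, w i t * (αA' i + γA' t) = ∑ i, A i t := by
    intro t; simp only [hsumA]; exact hA2 t
  have hB1' : ∀ i, ∑ t, w i t * (αB' i + γB' t) = ∑ t, B i t := by
    intro i; simp only [hsumB]; exact hB1 i
  have hB2' : ∀ t, ∑ i, w i t * (αB' i + γB' t) = ∑ i, B i t := by
    intro t; simp only [hsumB]; exact hB2 t
  have hinv : (Hbar w b)⁻¹ * Hbar w b = 1 :=
    Matrix.nonsing_inv_mul _ ((Matrix.isUnit_iff_isUnit_det _).1 hH)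
  have invVec : ∀ (X : Matrix (Fin N) (Fin T) ℝ) (α : Fin N → ℝ) (γ : Fin T → ℝ),
      (∀ i, ∑ t, w i t * (α i + γ t) = ∑ t, X i t) →
      (∀ t, ∑ i, w i t * (α i + γ t) = ∑ i, X i t) →
      (∑ i, α i = ∑ t, γ t) →
      (Hbar w b)⁻¹.mulVec (scoreVec X) = c⁻¹ • Sum.elim α γ := by
    intro X α γ e1 e2 e0
    have h := hbar_mulVec hN hT w b X α γ e1 e2 e0
    have : scoreVec X = c⁻¹ • (Hbar w b).mulVec (Sum.elim α γ) := by
      rw [h, smul_smul, inv_mul_cancel₀ hc, one_smul]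
    rw [this, Matrix.mulVec_smul, Matrix.mulVec_mulVec, hinv, Matrix.one_mulVec]
  have hBvec := invVec B αB' γB' hB1' hB2' h0B
  have hAvec := invVec A αA' γA' hA1' hA2' h0A
  have hsymm : ((Hbar w b)⁻¹)ᵀ = (Hbar w b)⁻¹ := by
    rw [Matrix.transpose_nonsing_inv, hbar_symm]
  rw [← Matrix.mulVec_mulVec, ← Matrix.mulVec_mulVec, Matrix.dotProduct_mulVec,
    ← Matrix.mulVec_transpose, hsymm, hAvec, hBvec, Cmat,
    Matrix.smul_mulVec, Matrix.mulVec_smul]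
  rw [smul_dotProduct, dotProduct_smul, dotProduct_smul, quadForm]
  have hS : ∑ i, ∑ t, (αA' i + γA' t) * C i t * (αB' i + γB' t)
      = ∑ i, ∑ t, (αA i + γA t) * C i t * (αB i + γB t) := by
    refine Finset.sum_congr rfl fun i _ => Finset.sum_congr rfl fun t _ => ?_
    rw [hsumA, hsumB]
  rw [hS]
  have hcinv : c⁻¹ * c⁻¹ = ((N:ℝ)*T)⁻¹ := by rw [← mul_inv, hcc]
  have : (((N:ℝ)*T)^2)⁻¹ = c⁻¹ * (((N:ℝ)*T)⁻¹ * c⁻¹) := by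
    rw [mul_comm (((N:ℝ)*T)⁻¹), ← mul_assoc, hcinv, sq, mul_inv]
  rw [this]
  simp only [smul_eq_mul]
  ring
end
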